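/- Fix an integer m ≥ 2, let U_c := m^{−1/(m−1)}, g_c := U_c^m, and H_m := Σ_{k=1}^{m} 1/k. For g ∈ (0, g_c) define f₀(g) := (1/g)·Σ_{k=1}^{m} (1/k)·U_c^{m−k}·(U_c^k − (g_c − g)^{k/m}) − log(U_c − (g_c − g)^{1/m}). Then, as g tends to g_c from the left, the quotient (f₀(g) − (H_m − log U_c) − H_m·((g_c − g)/g_c)) / ((g_c − g)/g_c)^{(m+1)/m} tends to −m/(m+1). -/

import Mathlib

open Filter

private lemma icc_sum_aux (m : ℕ) (t : ℝ) :
    ∑ k ∈ Finset.Icc 1 m, t ^ k / (k : ℝ)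
      = ∑ i ∈ Finset.range m, t ^ (i + 1) / ((i : ℝ) + 1) := by
  rw [← Finset.Ico_add_one_right_eq_Icc, Finset.sum_Ico_eq_sum_range]
  refine Finset.sum_congr rfl fun i _ => ?_
  push_cast
  ring

private lemma rpow_pow_aux {x : ℝ} (hx : 0 ≤ x) {m : ℕ} (hm : m ≠ 0) (k : ℕ) :
    x ^ ((k : ℝ) / (m : ℝ)) = (x ^ ((1 : ℝ) / (m : ℝ))) ^ k := by
  have hm' : (m : ℝ) ≠ 0 := Nat.cast_ne_zero.mpr hm
  rw [← Real.rpow_natCast (x ^ ((1 : ℝ) / (m : ℝ))) k, ← Real.rpow_mul hx]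
  congr 1
  field_simp

private lemma pow_rpow_aux {U : ℝ} (hU : 0 ≤ U) {m : ℕ} (hm : m ≠ 0) (k : ℕ) :
    (U ^ m) ^ ((k : ℝ) / (m : ℝ)) = U ^ k := by
  have hm' : (m : ℝ) ≠ 0 := Nat.cast_ne_zero.mpr hm
  rw [← Real.rpow_natCast U m, ← Real.rpow_mul hU,
    show (m : ℝ) * ((k : ℝ) / (m : ℝ)) = (k : ℝ) by field_simp,
    Real.rpow_natCast]

/-- Part 1 limit: `(-log(1-t) - ∑_{k=1}^m t^k/k)/t^{m+1} → 1/(m+1)` as `t → 0⁺`. -/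
private lemma partA (m : ℕ) (hm : 2 ≤ m) :
    Tendsto (fun t : ℝ =>
        (-Real.log (1 - t) - ∑ k ∈ Finset.Icc 1 m, t ^ k / (k : ℝ)) / t ^ (m + 1))
      (nhdsWithin 0 (Set.Ioo 0 1)) (nhds (1 / ((m : ℝ) + 1))) := by
  rw [← tendsto_sub_nhds_zero_iff]
  apply squeeze_zero_norm' (a := fun t : ℝ => t / (1 - t))
  · filter_upwards [self_mem_nhdsWithin] with t ht
    obtain ⟨ht0, ht1⟩ := ht
    have htne : t ≠ 0 := ne_of_gt ht0
    have habs : |t| = t := abs_of_pos ht0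
    have hb := Real.abs_log_sub_add_sum_range_le (x := t) (by rw [habs]; exact ht1) (m + 1)
    rw [habs] at hb
    have hmr : ((m : ℝ) + 1) ≠ 0 := by positivity
    have hkey : (-Real.log (1 - t) - ∑ k ∈ Finset.Icc 1 m, t ^ k / (k : ℝ)) / t ^ (m + 1)
        - 1 / ((m : ℝ) + 1)
        = -(((∑ i ∈ Finset.range (m + 1), t ^ (i + 1) / ((i : ℝ) + 1))
            + Real.log (1 - t)) / t ^ (m + 1)) := by
      rw [icc_sum_aux, Finset.sum_range_succ]
      field_simp
      ring
    rw [hkey, norm_neg, norm_div, Real.norm_eq_abs, Real.norm_eq_abs,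
      abs_of_pos (pow_pos ht0 (m + 1))]
    calc |(∑ i ∈ Finset.range (m + 1), t ^ (i + 1) / ((i : ℝ) + 1)) + Real.log (1 - t)|
          / t ^ (m + 1)
        ≤ (t ^ (m + 1 + 1) / (1 - t)) / t ^ (m + 1) := by gcongr
      _ = t / (1 - t) := by
          rw [pow_succ, mul_div_assoc]
          exact mul_div_cancel_left₀ _ (pow_ne_zero _ htne)
  · have hc : ContinuousAt (fun t : ℝ => t / (1 - t)) 0 := by
      apply ContinuousAt.div (by fun_prop) (by fun_prop)
      norm_num
    have := hc.tendsto.mono_left (nhdsWithin_le_nhds (s := Set.Ioo (0:ℝ) 1))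
    simpa using this

/-- Part 2 limit: `(Hm·t^{m-1} - ∑_{k=1}^m t^{k-1}/k)/(1-t^m) → -1` as `t → 0`. -/
private lemma partB (m : ℕ) (hm : 2 ≤ m) (Hm : ℝ) :
    Tendsto (fun t : ℝ =>
        (Hm * t ^ (m - 1) - ∑ k ∈ Finset.Icc 1 m, t ^ (k - 1) / (k : ℝ)) / (1 - t ^ m))
      (nhdsWithin 0 (Set.Ioo 0 1)) (nhds (-1 : ℝ)) := by
  have hm0 : m ≠ 0 := by omega
  have hm1 : m - 1 ≠ 0 := by omega
  have hc : ContinuousAt (fun t : ℝ =>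
      (Hm * t ^ (m - 1) - ∑ k ∈ Finset.Icc 1 m, t ^ (k - 1) / (k : ℝ)) / (1 - t ^ m)) 0 := by
    apply ContinuousAt.div (by fun_prop) (by fun_prop)
    simp [zero_pow hm0]
  have hval : (Hm * (0:ℝ) ^ (m - 1) - ∑ k ∈ Finset.Icc 1 m, (0:ℝ) ^ (k - 1) / (k : ℝ))
      / (1 - (0:ℝ) ^ m) = -1 := by
    have hsum : ∑ k ∈ Finset.Icc 1 m, (0:ℝ) ^ (k - 1) / (k : ℝ) = 1 := by
      rw [Finset.sum_eq_single_of_mem 1 (Finset.mem_Icc.mpr ⟨le_refl 1, by omega⟩)]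
      · norm_num
      · intro k hk hkne
        have : k - 1 ≠ 0 := by
          have := (Finset.mem_Icc.mp hk).1; omega
        simp [zero_pow this]
    rw [hsum, zero_pow hm0, zero_pow hm1]
    norm_num
  have := hc.tendsto.mono_left (nhdsWithin_le_nhds (s := Set.Ioo (0:ℝ) 1))
  rw [hval] at this
  exact this

/-- Order-`m` multicriticality: with `U_c = m^{-1/(m-1)}`, `g_c = U_c^m`,
`H_m = ∑_{k=1}^m 1/k` and, for `g ∈ (0, g_c)`,
`f₀(g) = (1/g)·∑_{k=1}^m (1/k)·U_c^{m-k}·(U_c^k - (g_c - g)^{k/m}) - log(U_c - (g_c - g)^{1/m})`,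
one has `(f₀(g) - (H_m - log U_c) - H_m·((g_c-g)/g_c)) / ((g_c-g)/g_c)^{(m+1)/m} → -m/(m+1)`
as `g → g_c⁻`. -/
theorem stmt_14 (m : ℕ) (hm : 2 ≤ m) (Uc gc Hm : ℝ) (f₀ : ℝ → ℝ)
    (hUc : Uc = (m : ℝ) ^ (-(1 : ℝ) / ((m : ℝ) - 1)))
    (hgc : gc = Uc ^ m)
    (hHm : Hm = ∑ k ∈ Finset.Icc 1 m, (1 : ℝ) / (k : ℝ))
    (hf : ∀ g ∈ Set.Ioo (0 : ℝ) gc,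
      f₀ g = (1 / g) * ∑ k ∈ Finset.Icc 1 m,
          (1 / (k : ℝ)) * Uc ^ (m - k) * (Uc ^ k - (gc - g) ^ ((k : ℝ) / (m : ℝ)))
        - Real.log (Uc - (gc - g) ^ ((1 : ℝ) / (m : ℝ)))) :
    Tendsto (fun g : ℝ =>
        (f₀ g - (Hm - Real.log Uc) - Hm * ((gc - g) / gc))
          / ((gc - g) / gc) ^ (((m : ℝ) + 1) / (m : ℝ)))
      (nhdsWithin gc (Set.Ioo 0 gc))
      (nhds (-(m : ℝ) / ((m : ℝ) + 1))) := by
  have hm0 : m ≠ 0 := by omega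
  have hmR : (0 : ℝ) < m := by exact_mod_cast Nat.pos_of_ne_zero hm0
  have hmR' : (m : ℝ) ≠ 0 := ne_of_gt hmR
  have hUc0 : 0 < Uc := hUc ▸ Real.rpow_pos_of_pos hmR _
  have hgc0 : 0 < gc := hgc ▸ pow_pos hUc0 m
  -- the model function of `t`
  set F : ℝ → ℝ := fun t =>
    (-Real.log (1 - t) - ∑ k ∈ Finset.Icc 1 m, t ^ k / (k : ℝ)) / t ^ (m + 1)
    + (Hm * t ^ (m - 1) - ∑ k ∈ Finset.Icc 1 m, t ^ (k - 1) / (k : ℝ)) / (1 - t ^ m)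
    with hF
  have hFlim : Tendsto F (nhdsWithin 0 (Set.Ioo 0 1)) (nhds (-(m : ℝ) / ((m : ℝ) + 1))) := by
    have := (partA m hm).add (partB m hm Hm)
    have hval : 1 / ((m : ℝ) + 1) + (-1) = -(m : ℝ) / ((m : ℝ) + 1) := by
      have : ((m : ℝ) + 1) ≠ 0 := by positivity
      field_simp
      ring
    rw [hval] at this
    exact this
  -- the substitution map
  set τ : ℝ → ℝ := fun g => ((gc - g) / gc) ^ ((1 : ℝ) / (m : ℝ)) with hτ
  have hτmem : ∀ g ∈ Set.Ioo (0 : ℝ) gc, τ g ∈ Set.Ioo (0 : ℝ) 1 := by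
    intro g hg
    have hx0 : 0 < (gc - g) / gc := div_pos (by linarith [hg.2]) hgc0
    have hx1 : (gc - g) / gc < 1 := by
      rw [div_lt_one hgc0]; linarith [hg.1]
    exact ⟨Real.rpow_pos_of_pos hx0 _,
      Real.rpow_lt_one hx0.le hx1 (by positivity)⟩
  have hτlim : Tendsto τ (nhdsWithin gc (Set.Ioo 0 gc)) (nhdsWithin 0 (Set.Ioo 0 1)) := by
    rw [tendsto_nhdsWithin_iff]
    constructor
    · have h1 : Tendsto (fun g : ℝ => (gc - g) / gc) (nhdsWithin gc (Set.Ioo 0 gc))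
          (nhds 0) := by
        have hc : ContinuousAt (fun g : ℝ => (gc - g) / gc) gc := by fun_prop
        have := hc.tendsto.mono_left (nhdsWithin_le_nhds (s := Set.Ioo 0 gc))
        simpa using this
      have h2 : ContinuousAt (fun x : ℝ => x ^ ((1 : ℝ) / (m : ℝ))) 0 :=
        Real.continuousAt_rpow_const 0 _ (Or.inr (by positivity))
      have h3 := h2.tendsto.comp h1
      simpa [hτ, Function.comp_def, one_div,
        Real.zero_rpow (show ((m:ℝ))⁻¹ ≠ 0 by positivity)] using h3
    · filter_upwards [self_mem_nhdsWithin] with g hg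
      exact hτmem g hg
  -- pointwise identification
  have key : ∀ g ∈ Set.Ioo (0 : ℝ) gc,
      (f₀ g - (Hm - Real.log Uc) - Hm * ((gc - g) / gc))
          / ((gc - g) / gc) ^ (((m : ℝ) + 1) / (m : ℝ)) = F (τ g) := by
    intro g hg
    obtain ⟨hg0, hg1⟩ := hg
    set x : ℝ := (gc - g) / gc with hxdef
    have hx0 : 0 < x := div_pos (by linarith) hgc0
    have hx1 : x < 1 := by rw [hxdef, div_lt_one hgc0]; linarith
    set t : ℝ := x ^ ((1 : ℝ) / (m : ℝ)) with htdef
    have ht0 : 0 < t := Real.rpow_pos_of_pos hx0 _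
    have ht1 : t < 1 := Real.rpow_lt_one hx0.le hx1 (by positivity)
    have htm : t ^ m = x := by
      rw [htdef, ← rpow_pow_aux hx0.le hm0 m,
        show ((m : ℝ) / (m : ℝ)) = 1 by field_simp, Real.rpow_one]
    have hgg : gc - g = gc * x := by
      rw [hxdef]; field_simp
    have hpow : ∀ k : ℕ, (gc - g) ^ ((k : ℝ) / (m : ℝ)) = Uc ^ k * t ^ k := by
      intro k
      rw [hgg, Real.mul_rpow hgc0.le hx0.le, hgc, pow_rpow_aux hUc0.le hm0 k,
        rpow_pow_aux hx0.le hm0 k]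
    have hpow1 : (gc - g) ^ ((1 : ℝ) / (m : ℝ)) = Uc * t := by
      have := hpow 1
      simpa using this
    have hden : x ^ (((m : ℝ) + 1) / (m : ℝ)) = t ^ (m + 1) := by
      have := rpow_pow_aux hx0.le hm0 (m + 1)
      rw [htdef, ← this]
      norm_num
    have hgval : g = gc * (1 - t ^ m) := by
      rw [htm, hxdef]; field_simp; ring
    -- sum computation
    have hsum : ∑ k ∈ Finset.Icc 1 m,
        (1 / (k : ℝ)) * Uc ^ (m - k) * (Uc ^ k - (gc - g) ^ ((k : ℝ) / (m : ℝ)))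
        = gc * (Hm - ∑ k ∈ Finset.Icc 1 m, t ^ k / (k : ℝ)) := by
      rw [hHm, mul_sub, Finset.mul_sum, Finset.mul_sum, ← Finset.sum_sub_distrib]
      refine Finset.sum_congr rfl fun k hk => ?_
      obtain ⟨hk1, hk2⟩ := Finset.mem_Icc.mp hk
      have hUcm : Uc ^ (m - k) * Uc ^ k = Uc ^ m := by
        rw [← pow_add, Nat.sub_add_cancel hk2]
      rw [hpow k]
      calc (1 / (k : ℝ)) * Uc ^ (m - k) * (Uc ^ k - Uc ^ k * t ^ k)
          = (Uc ^ (m - k) * Uc ^ k) * ((1 : ℝ) / k - t ^ k / k) := by ring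
        _ = Uc ^ m * ((1 : ℝ) / k - t ^ k / k) := by rw [hUcm]
        _ = gc * (1 / (k : ℝ)) - gc * (t ^ k / (k : ℝ)) := by rw [hgc]; ring
    have h1tm : (0:ℝ) < 1 - t ^ m := by
      have : t ^ m < 1 := pow_lt_one₀ ht0.le ht1 hm0
      linarith
    have h1t : (0:ℝ) < 1 - t := by linarith
    have hlog : Real.log (Uc - (gc - g) ^ ((1 : ℝ) / (m : ℝ)))
        = Real.log Uc + Real.log (1 - t) := by
      rw [hpow1, show Uc - Uc * t = Uc * (1 - t) by ring,
        Real.log_mul hUc0.ne' h1t.ne']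
    have hfval : f₀ g = (Hm - ∑ k ∈ Finset.Icc 1 m, t ^ k / (k : ℝ)) / (1 - t ^ m)
        - Real.log Uc - Real.log (1 - t) := by
      rw [hf g ⟨hg0, hg1⟩, hsum, hlog, hgval]
      have hne : 1 - t ^ m ≠ 0 := h1tm.ne'
      field_simp
      ring
    -- algebra
    have hSt : ∑ k ∈ Finset.Icc 1 m, t ^ k / (k : ℝ)
        = t * ∑ k ∈ Finset.Icc 1 m, t ^ (k - 1) / (k : ℝ) := by
      rw [Finset.mul_sum]
      refine Finset.sum_congr rfl fun k hk => ?_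
      obtain ⟨hk1, _⟩ := Finset.mem_Icc.mp hk
      rw [show t ^ k = t * t ^ (k - 1) by
        rw [← pow_succ', Nat.sub_add_cancel hk1]]
      ring
    set P : ℝ := ∑ k ∈ Finset.Icc 1 m, t ^ (k - 1) / (k : ℝ) with hP
    set L : ℝ := Real.log (1 - t) with hL
    have e1 : t ^ m = t ^ (m - 1) * t := by
      rw [← pow_succ, Nat.sub_add_cancel (by omega : 1 ≤ m)]
    have e2 : t ^ (m + 1) = t ^ (m - 1) * t * t := by
      rw [← pow_succ, ← pow_succ, Nat.sub_add_cancel (by omega : 1 ≤ m)]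
    show (f₀ g - (Hm - Real.log Uc) - Hm * x) / x ^ (((m : ℝ) + 1) / (m : ℝ)) = F t
    rw [hden, hfval, ← htm, hF]
    simp only [← hP, ← hL, hSt, e1, e2]
    have ha : t ^ (m - 1) ≠ 0 := pow_ne_zero _ ht0.ne'
    have hne : 1 - t ^ (m - 1) * t ≠ 0 := by rw [← e1]; exact h1tm.ne'
    have hne' : 1 - t * t ^ (m - 1) ≠ 0 := by rw [mul_comm]; exact hne
    field_simp
    ring
  -- conclude
  refine Tendsto.congr' ?_ (hFlim.comp hτlim)
  filter_upwards [self_mem_nhdsWithin] with g hg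
  exact (key g hg).symm
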